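/- The eigenvalues of the matrix Σ_n (counted with multiplicity) are 2^n - 1 with multiplicity 1 and 2^{n-k} - 1 with multiplicity 2^k for k = 0, …, n-1. In particular Σ_n is positive definite and its largest eigenvalue is 2^n - 1, so the largest eigenvalue of Σ_n^{-1} is at most 1. -/

import Mathlib

open Matrix Finset Polynomial

noncomputable def blockEquiv (n : ℕ) : Fin (2 ^ n) ⊕ Fin (2 ^ n) ≃ Fin (2 ^ (n + 1)) :=
  finSumFinEquiv.trans (finCongr (by rw [pow_succ, mul_two]))

def allOnes (n : ℕ) : Matrix (Fin (2 ^ n)) (Fin (2 ^ n)) ℝ := Matrix.of fun _ _ => 1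

variable {R : Type*} [CommRing R]

lemma det_updateRow_colSum {N : ℕ} [NeZero N] (M : Matrix (Fin N) (Fin N) R) :
    (M.updateRow 0 (fun j => ∑ i, M i j)).det = M.det := by
  set F : Matrix (Fin N) (Fin N) R :=
    Matrix.of fun i j => if i = 0 then 1 else if i = j then (1:R) else 0 with hFdef
  have hF : M.updateRow 0 (fun j => ∑ i, M i j) = F * M := by
    ext i j
    rcases eq_or_ne i 0 with h | h
    · subst h
      simp [Matrix.mul_apply, hFdef]
    · simp only [Matrix.updateRow_apply, if_neg h, Matrix.mul_apply, Matrix.of_apply, hFdef]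
      rw [Finset.sum_eq_single i]
      · simp [h]
      · intro b _ hb; simp [h, hb.symm, fun hh : i = b => hb hh.symm]
      · simp
  rw [hF, Matrix.det_mul]
  have hFdet : F.det = 1 := by
    rw [Matrix.det_of_upperTriangular]
    · rw [Finset.prod_eq_one]
      intro i _
      rcases eq_or_ne i 0 with h | h <;> simp [hFdef, h]
    · intro i j hij
      have hi : i ≠ 0 := by
        rintro rfl
        exact absurd hij (by simp)
      have : i ≠ j := by
        rintro rfl; exact lt_irrefl _ hij
      simp [hFdef, hi, this]
  rw [hFdet, one_mul]


lemma charmatrix_colSum {N : ℕ} [NeZero N] (A : Matrix (Fin N) (Fin N) R) (c : R)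
    (hc : ∀ j, ∑ i, A i j = c) (j : Fin N) :
    ∑ i, (charmatrix A) i j = X - C c := by
  simp only [charmatrix_apply, Finset.sum_sub_distrib, ← C_eq_natCast]
  rw [← map_sum, hc]
  congr 1
  simp [Matrix.diagonal_apply, Finset.sum_ite_eq]

lemma key_charpoly {N : ℕ} [NeZero N] (A : Matrix (Fin N) (Fin N) R) (c : R)
    (hc : ∀ j, ∑ i, A i j = c) :
    (X - C c) * (Matrix.of (fun _ _ => (1:R)) + A).charpoly
      = (X - C ((N : R) + c)) * A.charpoly := by
  classical
  set J : Matrix (Fin N) (Fin N) R := Matrix.of fun _ _ => (1:R) with hJ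
  have hcJA : ∀ j, ∑ i, (J + A) i j = (N : R) + c := by
    intro j
    simp only [Matrix.add_apply, Finset.sum_add_distrib, hc, hJ, Matrix.of_apply,
      Finset.sum_const, Finset.card_univ, Fintype.card_fin, nsmul_eq_mul, mul_one]
  -- common reduced matrix
  set M' : Matrix (Fin N) (Fin N) R[X] :=
    (charmatrix A).updateRow 0 (fun _ => 1) with hM'
  have e1 : A.charpoly = (X - C c) * M'.det := by
    rw [Matrix.charpoly, ← det_updateRow_colSum (charmatrix A)]
    have : (fun j => ∑ i, (charmatrix A) i j) = (X - C c) • (fun _ : Fin N => (1:R[X])) := by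
      funext j
      simp [charmatrix_colSum A c hc j]
    rw [this, Matrix.det_updateRow_smul]
  have e2 : (J + A).charpoly = (X - C ((N:R) + c)) * M'.det := by
    rw [Matrix.charpoly, ← det_updateRow_colSum (charmatrix (J + A))]
    have h1 : (fun j => ∑ i, (charmatrix (J + A)) i j)
        = (X - C ((N:R) + c)) • (fun _ : Fin N => (1:R[X])) := by
      funext j
      simp [charmatrix_colSum (J + A) ((N:R)+c) hcJA j]
    rw [h1, Matrix.det_updateRow_smul]
    congr 1
    set E : Matrix (Fin N) (Fin N) R[X] :=
      Matrix.of fun i j => if i = j then 1 else if j = 0 then -1 else 0 with hE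
    have hEM : (charmatrix (J + A)).updateRow 0 (fun _ => 1) = E * M' := by
      ext i j
      rcases eq_or_ne i 0 with h | h
      · subst h
        simp only [Matrix.updateRow_self, Matrix.mul_apply, hE, Matrix.of_apply]
        rw [Finset.sum_eq_single (0 : Fin N)]
        · simp [hM']
        · intro b _ hb
          simp [hb, Ne.symm hb]
        · simp
      · simp only [Matrix.updateRow_apply, if_neg h, Matrix.mul_apply, hE, Matrix.of_apply]
        rw [Finset.sum_eq_add_of_mem i 0 (Finset.mem_univ _) (Finset.mem_univ _) h]
        · simp only [if_pos rfl, if_neg h, if_neg (Ne.symm h), if_pos rfl, one_mul, neg_one_mul,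
            hM', Matrix.updateRow_apply, if_neg h, Matrix.updateRow_self]
          rw [charmatrix_apply, charmatrix_apply]
          simp only [Matrix.add_apply, hJ, Matrix.of_apply, map_add, Polynomial.C_1, if_true]
          ring
        · intro b _ hb
          simp [hb.1, Ne.symm hb.1, hb.2]
    rw [hEM, Matrix.det_mul]
    have hEdet : E.det = 1 := by
      rw [Matrix.det_of_lowerTriangular]
      · exact Finset.prod_eq_one fun i _ => by simp [hE]
      · intro i j hij
        have h1 : i ≠ j := fun hh => by subst hh; exact lt_irrefl _ hij
        have h2 : j ≠ 0 := by
          rintro rfl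
          exact absurd (OrderDual.toDual_lt_toDual.mp hij) (not_lt.mpr (Fin.zero_le _))
        simp [hE, h1, h2]
    rw [hEdet, one_mul]
  rw [e1, e2]; ring

lemma eig_isRoot_charpoly {N : ℕ} (M : Matrix (Fin N) (Fin N) ℝ) {μ : ℝ}
    (h : Module.End.HasEigenvalue (Matrix.toLin' M) μ) : M.charpoly.IsRoot μ := by
  have h1 : (minpoly ℝ (Matrix.toLin' M)).IsRoot μ :=
    Module.End.hasEigenvalue_iff_isRoot.mp h
  rw [Matrix.minpoly_toLin'] at h1
  exact h1.dvd (Matrix.minpoly_dvd_charpoly M)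

lemma posDef_fromBlocks {m n : Type*} [Fintype m] [Fintype n]
    {A : Matrix m m ℝ} {D : Matrix n n ℝ} (hA : A.PosDef) (hD : D.PosDef) :
    (Matrix.fromBlocks A 0 0 D).PosDef := by
  rw [Matrix.posDef_iff_dotProduct_mulVec]
  constructor
  · rw [Matrix.isHermitian_fromBlocks_iff]
    exact ⟨hA.isHermitian, by simp, by simp, hD.isHermitian⟩
  · intro x hx
    have hsplit : Matrix.fromBlocks A 0 0 D *ᵥ x
        = Sum.elim (A *ᵥ (x ∘ Sum.inl)) (D *ᵥ (x ∘ Sum.inr)) := by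
      rw [Matrix.fromBlocks_mulVec]
      simp
    rw [hsplit]
    have hdot : star x ⬝ᵥ Sum.elim (A *ᵥ (x ∘ Sum.inl)) (D *ᵥ (x ∘ Sum.inr))
        = star (x ∘ Sum.inl) ⬝ᵥ (A *ᵥ (x ∘ Sum.inl))
          + star (x ∘ Sum.inr) ⬝ᵥ (D *ᵥ (x ∘ Sum.inr)) := by
      simp [dotProduct, Fintype.sum_sum_type, Function.comp]
    rw [hdot]
    rcases eq_or_ne (x ∘ Sum.inl) 0 with h1 | h1
    · have h2 : x ∘ Sum.inr ≠ 0 := by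
        intro h2
        apply hx
        funext i
        cases i with
        | inl i => exact congrFun h1 i
        | inr i => exact congrFun h2 i
      have := hD.dotProduct_mulVec_pos h2
      have hge := hA.posSemidef.dotProduct_mulVec_nonneg (x ∘ Sum.inl)
      linarith
    · have := hA.dotProduct_mulVec_pos h1
      have hge := hD.posSemidef.dotProduct_mulVec_nonneg (x ∘ Sum.inr)
      linarith

lemma posDef_reindex {m n : Type*} [Fintype m] [Fintype n] [DecidableEq m] [DecidableEq n]
    {M : Matrix m m ℝ} (e : m ≃ n) (hM : M.PosDef) : (Matrix.reindex e e M).PosDef := by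
  rw [Matrix.posDef_iff_dotProduct_mulVec]
  constructor
  · rw [Matrix.reindex_apply]
    exact hM.isHermitian.submatrix _
  · intro x hx
    rw [Matrix.reindex_apply, Matrix.submatrix_mulVec_equiv]
    have hdot : star x ⬝ᵥ ((M *ᵥ (x ∘ ⇑e.symm.symm)) ∘ ⇑e.symm)
        = star (x ∘ ⇑e) ⬝ᵥ (M *ᵥ (x ∘ ⇑e)) := by
      simp only [Equiv.symm_symm, dotProduct]
      rw [← Equiv.sum_comp e (fun j => star x j * ((M *ᵥ (x ∘ ⇑e)) ∘ ⇑e.symm) j)]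
      simp [Function.comp]
    rw [hdot]
    exact hM.dotProduct_mulVec_pos (fun h => hx (by funext i; simpa using congrFun h (e.symm i)))

lemma allOnes_posSemidef (n : ℕ) : (allOnes n).PosSemidef := by
  have : allOnes n = (Matrix.of fun (_ : Fin 1) (_ : Fin (2^n)) => (1:ℝ))ᴴ
      * (Matrix.of fun (_ : Fin 1) (_ : Fin (2^n)) => (1:ℝ)) := by
    ext i j
    simp [Matrix.mul_apply, allOnes]
  rw [this]
  exact Matrix.posSemidef_conjTranspose_mul_self _

lemma charpoly_one' {n : Type*} [DecidableEq n] [Fintype n] :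
    (1 : Matrix n n R).charpoly = (X - C 1) ^ (Fintype.card n) := by
  rw [Matrix.charpoly]
  have h : charmatrix (1 : Matrix n n R) = Matrix.diagonal (fun _ => X - C 1) := by
    ext i j
    rcases eq_or_ne i j with h | h <;>
      simp [charmatrix_apply, Matrix.diagonal_apply, h, Matrix.one_apply]
  rw [h, Matrix.det_diagonal, Finset.prod_const, Finset.card_univ]

lemma root_bound {n : ℕ} (hn : 1 ≤ n) {μ : ℝ}
    (h : ((X - C ((2:ℝ)^n - 1)) *
      ∏ k ∈ Finset.range n, (X - C ((2:ℝ)^(n-k) - 1)) ^ (2^k)).IsRoot μ) :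
    1 ≤ μ ∧ μ ≤ (2:ℝ)^n - 1 := by
  have key : ∀ m : ℕ, 1 ≤ m → m ≤ n → (1:ℝ) ≤ 2^m - 1 ∧ (2:ℝ)^m - 1 ≤ 2^n - 1 := by
    intro m h1 h2
    have ha : (2:ℝ)^1 ≤ 2^m := pow_le_pow_right₀ (by norm_num) h1
    have hb : (2:ℝ)^m ≤ 2^n := pow_le_pow_right₀ (by norm_num) h2
    constructor <;> [skip; skip] <;> simp at ha <;> linarith
  rw [Polynomial.IsRoot, eval_mul, mul_eq_zero] at h
  rcases h with h | h
  · have : μ = (2:ℝ)^n - 1 := by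
      have := h
      simp only [eval_sub, eval_X, eval_C, sub_eq_zero] at this
      exact this
    rw [this]
    exact ⟨(key n hn le_rfl).1, le_rfl⟩
  · rw [eval_prod] at h
    obtain ⟨k, hk, h0⟩ := Finset.prod_eq_zero_iff.mp h
    rw [eval_pow, pow_eq_zero_iff (by positivity)] at h0
    simp only [eval_sub, eval_X, eval_C, sub_eq_zero] at h0
    rw [h0]
    have hkn : k < n := Finset.mem_range.mp hk
    have h1 : 1 ≤ n - k := by omega
    have h2 : n - k ≤ n := Nat.sub_le _ _
    exact key (n - k) h1 h2

lemma master (S : ∀ n : ℕ, Matrix (Fin (2 ^ n)) (Fin (2 ^ n)) ℝ)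
    (h1 : S 1 = 1)
    (hrec : ∀ n : ℕ, 1 ≤ n →
      S (n + 1) = (Matrix.reindex (blockEquiv n) (blockEquiv n))
        (Matrix.fromBlocks (allOnes n + S n) 0 0 (allOnes n + S n))) :
    ∀ n : ℕ, 1 ≤ n →
      (∀ j, ∑ i, S n i j = (2:ℝ)^n - 1) ∧ (S n).PosDef ∧
      (S n).charpoly = (X - C ((2 : ℝ) ^ n - 1)) *
          ∏ k ∈ Finset.range n, (X - C ((2 : ℝ) ^ (n - k) - 1)) ^ (2 ^ k) := by
  intro n hn
  induction n, hn using Nat.le_induction with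
  | base =>
    refine ⟨?_, ?_, ?_⟩
    · intro j
      rw [h1]
      simp [Matrix.one_apply]
      norm_num
    · rw [h1]; exact Matrix.PosDef.one
    · rw [h1, charpoly_one', Finset.prod_range_one]
      norm_num
      ring
  | succ n hn ih =>
    obtain ⟨hcol, hpd, hcp⟩ := ih
    haveI : NeZero (2^n) := ⟨pow_ne_zero _ two_ne_zero⟩
    set B : Matrix (Fin (2^n)) (Fin (2^n)) ℝ := allOnes n + S n with hB
    set P : ℝ[X] := ∏ k ∈ Finset.range n, (X - C ((2:ℝ)^(n-k) - 1))^(2^k) with hP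
    set t : ℝ := (2:ℝ)^(n+1) - 1 with ht
    have hkey := key_charpoly (S n) ((2:ℝ)^n - 1) hcol
    have hcast : ((2^n : ℕ) : ℝ) + ((2:ℝ)^n - 1) = t := by
      push_cast; rw [ht, pow_succ]; ring
    have hBcp : B.charpoly = (X - C t) * P := by
      have hne : (X - C ((2:ℝ)^n - 1)) ≠ 0 := X_sub_C_ne_zero _
      apply mul_left_cancel₀ hne
      have hBeq : Matrix.of (fun _ _ => (1:ℝ)) + S n = B := rfl
      rw [hBeq] at hkey
      rw [hkey, hcast, hcp, hP]
      ring
    have hBpd : B.PosDef := Matrix.PosDef.posSemidef_add (allOnes_posSemidef n) hpd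
    refine ⟨?_, ?_, ?_⟩
    · intro j
      rw [hrec n hn]
      simp only [Matrix.reindex_apply, Matrix.submatrix_apply]
      rw [Equiv.sum_comp (blockEquiv n).symm
        (fun p => Matrix.fromBlocks B 0 0 B p ((blockEquiv n).symm j))]
      have hBcol : ∀ j', ∑ i, B i j' = (2:ℝ)^(n+1) - 1 := by
        intro j'
        rw [hB]
        simp only [Matrix.add_apply, Finset.sum_add_distrib, hcol j', allOnes, Matrix.of_apply,
          Finset.sum_const, Finset.card_univ, Fintype.card_fin, nsmul_eq_mul, mul_one]
        push_cast
        rw [pow_succ]; ring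
      rcases hq : (blockEquiv n).symm j with j' | j' <;>
        simp [Fintype.sum_sum_type, hBcol j', ht]
    · rw [hrec n hn]
      exact posDef_reindex _ (posDef_fromBlocks hBpd hBpd)
    · rw [hrec n hn, Matrix.charpoly_reindex, Matrix.charpoly_fromBlocks_zero₂₁, hBcp]
      rw [Finset.prod_range_succ']
      have hstep : ∀ k ∈ Finset.range n,
          (X - C ((2:ℝ)^((n+1) - (k+1)) - 1))^(2^(k+1))
            = ((X - C ((2:ℝ)^(n-k) - 1))^(2^k))^2 := by
        intro k _
        rw [Nat.succ_sub_succ, pow_succ, pow_mul]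
      rw [Finset.prod_congr rfl hstep, Finset.prod_pow, ← hP]
      simp only [Nat.sub_zero, pow_zero, pow_one, ← ht]
      ring

theorem stmt_4 (S : ∀ n : ℕ, Matrix (Fin (2 ^ n)) (Fin (2 ^ n)) ℝ)
    (h1 : S 1 = 1)
    (hrec : ∀ n : ℕ, 1 ≤ n →
      S (n + 1) = (Matrix.reindex (blockEquiv n) (blockEquiv n))
        (Matrix.fromBlocks (allOnes n + S n) 0 0 (allOnes n + S n))) :
    ∀ n : ℕ, 1 ≤ n →
      -- the eigenvalues, with multiplicity, are `2^n - 1` (multiplicity 1) and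
      -- `2^(n-k) - 1` with multiplicity `2^k`, `k = 0, …, n-1`:
      (S n).charpoly = (X - C ((2 : ℝ) ^ n - 1)) *
          ∏ k ∈ Finset.range n, (X - C ((2 : ℝ) ^ (n - k) - 1)) ^ (2 ^ k) ∧
      (S n).PosDef ∧
      (∀ μ : ℝ, Module.End.HasEigenvalue (Matrix.toLin' (S n)) μ → μ ≤ (2 : ℝ) ^ n - 1) ∧
      (∀ μ : ℝ, Module.End.HasEigenvalue (Matrix.toLin' (S n)⁻¹) μ → μ ≤ 1) := by
  intro n hn
  obtain ⟨hcol, hpd, hcp⟩ := master S h1 hrec n hn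
  have hroot : ∀ μ : ℝ, Module.End.HasEigenvalue (Matrix.toLin' (S n)) μ →
      1 ≤ μ ∧ μ ≤ (2:ℝ)^n - 1 := by
    intro μ hμ
    have := eig_isRoot_charpoly (S n) hμ
    rw [hcp] at this
    exact root_bound hn this
  refine ⟨hcp, hpd, fun μ hμ => (hroot μ hμ).2, ?_⟩
  intro μ hμ
  obtain ⟨v, hv⟩ := hμ.exists_hasEigenvector
  have hv1 : (S n)⁻¹ *ᵥ v = μ • v := by
    have h := hv.apply_eq_smul
    rwa [Matrix.toLin'_apply] at h
  have hdet : IsUnit (S n).det := isUnit_iff_ne_zero.mpr hpd.det_pos.ne'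
  have hvv : v = μ • (S n *ᵥ v) := by
    calc v = (S n * (S n)⁻¹) *ᵥ v := by rw [Matrix.mul_nonsing_inv _ hdet, Matrix.one_mulVec]
    _ = S n *ᵥ ((S n)⁻¹ *ᵥ v) := by rw [Matrix.mulVec_mulVec]
    _ = S n *ᵥ (μ • v) := by rw [hv1]
    _ = μ • (S n *ᵥ v) := by rw [Matrix.mulVec_smul]
  have hμ0 : μ ≠ 0 := by
    rintro rfl
    rw [zero_smul] at hvv
    exact hv.2 hvv
  have heig2 : S n *ᵥ v = μ⁻¹ • v := by
    have h2 := congrArg (fun w => μ⁻¹ • w) hvv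
    simp only [smul_smul, inv_mul_cancel₀ hμ0, one_smul] at h2
    exact h2.symm
  have heval : Module.End.HasEigenvalue (Matrix.toLin' (S n)) μ⁻¹ := by
    apply Module.End.hasEigenvalue_of_hasEigenvector (x := v)
    refine ⟨Module.End.mem_eigenspace_iff.mpr ?_, hv.2⟩
    rw [Matrix.toLin'_apply, heig2]
  have h1inv : 1 ≤ μ⁻¹ := (hroot μ⁻¹ heval).1
  exact (one_le_inv_iff₀.mp h1inv).2
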